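/- arXiv:2201.11478 — 3 statements merged into one kernel-verified Lean document; each statement's English description precedes it below -/
import Mathlib

section
/- Let φ be a tight inclusion of a persistence module M into a persistence module N over J, and let a < t < b be elements of J. Then φ_t(W^M_t(a,b)) = W^N_t(a,b) ∩ φ_t(V^M_t(a,b)). -/
/-- A persistence module over a set `J ⊆ ℝ` of scales: a family of `F`-vector spaces
together with commuting linear bonding maps. -/
structure PersistenceModule (F : Type*) [Field F] (J : Set ℝ) where
  space : J → Type*
  [addCommGroup : ∀ r : J, AddCommGroup (space r)]
  [module : ∀ r : J, Module F (space r)]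
  bond : ∀ r r' : J, (r : ℝ) ≤ (r' : ℝ) → (space r →ₗ[F] space r')
  bond_refl : ∀ r : J, bond r r le_rfl = LinearMap.id
  bond_comp : ∀ (r r' r'' : J) (h : (r : ℝ) ≤ (r' : ℝ)) (h' : (r' : ℝ) ≤ (r'' : ℝ)),
    (bond r' r'' h').comp (bond r r' h) = bond r r'' (h.trans h')

attribute [instance] PersistenceModule.addCommGroup PersistenceModule.module

/-- An inclusion of persistence modules: a family of injective linear maps commuting
with the bonding maps. -/
structure PersistenceModule.Inclusion {F : Type*} [Field F] {J : Set ℝ}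
    (M N : PersistenceModule F J) where
  toFun : ∀ r : J, M.space r →ₗ[F] N.space r
  injective : ∀ r : J, Function.Injective (toFun r)
  comm : ∀ (r r' : J) (h : (r : ℝ) ≤ (r' : ℝ)),
    (toFun r').comp (M.bond r r' h) = (N.bond r r' h).comp (toFun r)

/-- An inclusion `φ` of persistence modules is *tight* if for all `r' < r` in `J`,
`φ_r(Im ρ^M_{r',r}) = (range φ_r) ∩ Im ρ^N_{r',r}`. -/
def PersistenceModule.Inclusion.Tight {F : Type*} [Field F] {J : Set ℝ}
    {M N : PersistenceModule F J} (φ : M.Inclusion N) : Prop :=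
  ∀ (r' r : J) (h : (r' : ℝ) < (r : ℝ)),
    (LinearMap.range (M.bond r' r h.le)).map (φ.toFun r) =
      LinearMap.range (φ.toFun r) ⊓ LinearMap.range (N.bond r' r h.le)

/-- `V^P_t(a,b) = ⋂_{s ∈ J, a < s < t} Im ρ^P_{s,t} ∩ ⋂_{s ∈ J, s > b} ker ρ^P_{t,s}`. -/
noncomputable def PersistenceModule.V {F : Type*} [Field F] {J : Set ℝ}
    (P : PersistenceModule F J) (a t b : J) (htb : (t : ℝ) < (b : ℝ)) :
    Submodule F (P.space t) :=
  (⨅ s : J, ⨅ h : (a : ℝ) < (s : ℝ) ∧ (s : ℝ) < (t : ℝ),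
      LinearMap.range (P.bond s t h.2.le)) ⊓
  (⨅ s : J, ⨅ h : (b : ℝ) < (s : ℝ),
      LinearMap.ker (P.bond t s (htb.trans h).le))

/-- `W^P_t(a,b) = (Im ρ^P_{a,t} ∩ ⋂_{s ∈ J, s > b} ker ρ^P_{t,s})
      + (⋂_{s ∈ J, a < s < t} Im ρ^P_{s,t} ∩ ker ρ^P_{t,b})`. -/
noncomputable def PersistenceModule.W {F : Type*} [Field F] {J : Set ℝ}
    (P : PersistenceModule F J) (a t b : J)
    (hat : (a : ℝ) < (t : ℝ)) (htb : (t : ℝ) < (b : ℝ)) :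
    Submodule F (P.space t) :=
  (LinearMap.range (P.bond a t hat.le) ⊓
    (⨅ s : J, ⨅ h : (b : ℝ) < (s : ℝ),
      LinearMap.ker (P.bond t s (htb.trans h).le))) ⊔
  ((⨅ s : J, ⨅ h : (a : ℝ) < (s : ℝ) ∧ (s : ℝ) < (t : ℝ),
      LinearMap.range (P.bond s t h.2.le)) ⊓
    LinearMap.ker (P.bond t b htb.le))

/-- Let `φ` be a tight inclusion of a persistence module `M` into a
persistence module `N` over `J`, and let `a < t < b` be elements of `J`. Then
`φ_t(W^M_t(a,b)) = W^N_t(a,b) ∩ φ_t(V^M_t(a,b))`. -/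
theorem map_W_eq_W_inf_map_V
    {F : Type*} [Field F] {J : Set ℝ} {M N : PersistenceModule F J}
    (φ : M.Inclusion N) (hφ : φ.Tight)
    (a t b : J) (hat : (a : ℝ) < (t : ℝ)) (htb : (t : ℝ) < (b : ℝ)) :
    (M.W a t b hat htb).map (φ.toFun t) =
      N.W a t b hat htb ⊓ (M.V a t b htb).map (φ.toFun t) := by
  apply le_antisymm
  · refine le_inf ?_ (Submodule.map_mono ?_)
    · -- map φ W^M ≤ W^N
      rintro y ⟨x, hx, rfl⟩
      rw [SetLike.mem_coe, PersistenceModule.W, Submodule.mem_sup] at hx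
      obtain ⟨x1, ⟨⟨u, hu⟩, hk1⟩, x2, ⟨hI2, hk2⟩, rfl⟩ := hx
      rw [PersistenceModule.W, Submodule.mem_sup]
      refine ⟨φ.toFun t x1, ⟨⟨φ.toFun a u, ?_⟩, ?_⟩,
        φ.toFun t x2, ⟨?_, ?_⟩, (map_add _ _ _).symm⟩
      · have := congrArg (fun f => f u) (φ.comm a t hat.le)
        simp only [LinearMap.comp_apply] at this
        rw [← this, hu]
      · simp only [SetLike.mem_coe, Submodule.mem_iInf] at hk1
        simp only [SetLike.mem_coe, Submodule.mem_iInf]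
        intro s hs
        have := congrArg (fun f => f x1) (φ.comm t s (htb.trans hs).le)
        simp only [LinearMap.comp_apply] at this
        have h0 : M.bond t s (htb.trans hs).le x1 = 0 := hk1 s hs
        rw [LinearMap.mem_ker, ← this, h0, map_zero]
      · simp only [SetLike.mem_coe, Submodule.mem_iInf] at hI2
        simp only [SetLike.mem_coe, Submodule.mem_iInf]
        intro s hs
        obtain ⟨w, hw⟩ := hI2 s hs
        refine ⟨φ.toFun s w, ?_⟩
        have := congrArg (fun f => f w) (φ.comm s t hs.2.le)
        simp only [LinearMap.comp_apply] at this
        rw [← this, hw]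
      · have := congrArg (fun f => f x2) (φ.comm t b htb.le)
        simp only [LinearMap.comp_apply] at this
        have h0 : M.bond t b htb.le x2 = 0 := hk2
        rw [SetLike.mem_coe, LinearMap.mem_ker, ← this, h0, map_zero]
    · -- W^M ≤ V^M
      rw [PersistenceModule.W, PersistenceModule.V]
      refine sup_le (le_inf (inf_le_left.trans ?_) inf_le_right)
        (le_inf inf_le_left (inf_le_right.trans ?_))
      · simp only [le_iInf_iff]
        intro s hs
        rw [← M.bond_comp a s t hs.1.le hs.2.le]
        exact LinearMap.range_comp_le_range _ _
      · simp only [le_iInf_iff]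
        intro s hs
        rw [← M.bond_comp t b s htb.le hs.le]
        exact LinearMap.ker_le_ker_comp _ _
  · rintro y ⟨hyW, x, hxV, rfl⟩
    have hab : (a : ℝ) < (b : ℝ) := hat.trans htb
    rw [SetLike.mem_coe, PersistenceModule.W, Submodule.mem_sup] at hyW
    obtain ⟨y1, ⟨⟨u, hu⟩, hy1k⟩, y2, ⟨hy2I, hy2k⟩, hsum⟩ := hyW
    rw [SetLike.mem_coe, PersistenceModule.V] at hxV
    obtain ⟨hxI, hxK⟩ := hxV
    simp only [SetLike.mem_coe, Submodule.mem_iInf] at hxI hxK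
    -- key computation: φ_b (ρ^M_{t,b} x) = ρ^N_{a,b} u
    have key : φ.toFun b (M.bond t b htb.le x) = N.bond a b hab.le u := by
      have c1 := congrArg (fun f => f x) (φ.comm t b htb.le)
      simp only [LinearMap.comp_apply] at c1
      have c2 := congrArg (fun f => f u) (N.bond_comp a t b hat.le htb.le)
      simp only [LinearMap.comp_apply] at c2
      have hy2 : N.bond t b htb.le y2 = 0 := hy2k
      rw [c1, ← hsum, map_add, hy2, add_zero, ← hu, c2]
    have hmem : φ.toFun b (M.bond t b htb.le x) ∈
        (LinearMap.range (M.bond a b hab.le)).map (φ.toFun b) := by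
      rw [hφ a b hab]
      exact ⟨⟨_, rfl⟩, key ▸ ⟨u, rfl⟩⟩
    obtain ⟨z, ⟨v, rfl⟩, hz⟩ := hmem
    have hz' : M.bond a b hab.le v = M.bond t b htb.le x := φ.injective b hz
    set x1 := M.bond a t hat.le v with hx1def
    have hker : M.bond t b htb.le (x - x1) = 0 := by
      have c := congrArg (fun f => f v) (M.bond_comp a t b hat.le htb.le)
      simp only [LinearMap.comp_apply] at c
      rw [map_sub, hx1def, c, hz', sub_self]
    refine Submodule.mem_map_of_mem ?_
    rw [PersistenceModule.W, Submodule.mem_sup]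
    refine ⟨x1, ⟨⟨v, rfl⟩, ?_⟩, x - x1, ⟨?_, hker⟩, by abel⟩
    · simp only [SetLike.mem_coe, Submodule.mem_iInf]
      intro s hs
      have c := congrArg (fun f => f (x - x1)) (M.bond_comp t b s htb.le hs.le)
      simp only [LinearMap.comp_apply] at c
      have h1 : M.bond t s (htb.trans hs).le (x - x1) = 0 := by
        rw [← c, hker, map_zero]
      have h2 : M.bond t s (htb.trans hs).le x = 0 := hxK s hs
      have h3 := map_sub (M.bond t s (htb.trans hs).le) x x1
      rw [LinearMap.mem_ker]
      rw [h1, h2, zero_sub] at h3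
      exact neg_eq_zero.mp h3.symm
    · simp only [SetLike.mem_coe, Submodule.mem_iInf]
      intro s hs
      have hx := hxI s hs
      have hx1 : x1 ∈ LinearMap.range (M.bond s t hs.2.le) := by
        have c := congrArg (fun f => f v) (M.bond_comp a s t hs.1.le hs.2.le)
        simp only [LinearMap.comp_apply] at c
        exact ⟨M.bond a s hs.1.le v, by rw [c]⟩
      exact sub_mem hx hx1
end

section
/- Let φ be a tight inclusion of a persistence module M into a persistence module N over J, let a < t < b be elements of J, and assume N_t is finite-dimensional. Then dim V^M_t(a,b) − dim W^M_t(a,b) ≤ dim V^N_t(a,b) − dim W^N_t(a,b). (This is the key inequality showing that tight inclusions of persistence modules do not decrease the multiplicity of any bar of the form (a,b], hence induce inclusions of barcodes and persistence diagrams.) -/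
namespace PersistenceModule

variable {F : Type*} [Field F] {J : Set ℝ}

theorem bond_bond (P : PersistenceModule F J) (r r' r'' : J)
    (h : (r : ℝ) ≤ (r' : ℝ)) (h' : (r' : ℝ) ≤ (r'' : ℝ)) (x : P.space r) :
    P.bond r' r'' h' (P.bond r r' h x) = P.bond r r'' (h.trans h') x :=
  DFunLike.congr_fun (P.bond_comp r r' r'' h h') x

theorem range_bond_mono (P : PersistenceModule F J) (a s t : J)
    (h1 : (a : ℝ) ≤ (s : ℝ)) (h2 : (s : ℝ) ≤ (t : ℝ)) (h3 : (a : ℝ) ≤ (t : ℝ)) :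
    LinearMap.range (P.bond a t h3) ≤ LinearMap.range (P.bond s t h2) := by
  rintro _ ⟨u, rfl⟩
  exact ⟨P.bond a s h1 u, P.bond_bond a s t h1 h2 u⟩

theorem ker_bond_mono (P : PersistenceModule F J) (t b s : J)
    (h1 : (t : ℝ) ≤ (b : ℝ)) (h2 : (b : ℝ) ≤ (s : ℝ)) (h3 : (t : ℝ) ≤ (s : ℝ)) :
    LinearMap.ker (P.bond t b h1) ≤ LinearMap.ker (P.bond t s h3) := by
  intro x hx
  have : P.bond b s h2 (P.bond t b h1 x) = P.bond t s h3 x := P.bond_bond t b s h1 h2 x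
  rw [LinearMap.mem_ker, ← this, LinearMap.mem_ker.mp hx, map_zero]

theorem W_le_V (P : PersistenceModule F J) (a t b : J)
    (hat : (a : ℝ) < (t : ℝ)) (htb : (t : ℝ) < (b : ℝ)) :
    P.W a t b hat htb ≤ P.V a t b htb := by
  apply sup_le
  · refine inf_le_inf ?_ le_rfl
    refine le_iInf fun s => le_iInf fun h => ?_
    exact P.range_bond_mono a s t h.1.le h.2.le hat.le
  · refine inf_le_inf le_rfl ?_
    refine le_iInf fun s => le_iInf fun h => ?_
    exact P.ker_bond_mono t b s htb.le h.le ((htb.trans h).le)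

variable {M N : PersistenceModule F J}

theorem map_range_le (φ : M.Inclusion N) (s t : J) (h : (s : ℝ) ≤ (t : ℝ)) :
    (LinearMap.range (M.bond s t h)).map (φ.toFun t) ≤ LinearMap.range (N.bond s t h) := by
  rintro _ ⟨_, ⟨u, rfl⟩, rfl⟩
  exact ⟨φ.toFun s u, (DFunLike.congr_fun (φ.comm s t h) u).symm⟩

theorem map_ker_le (φ : M.Inclusion N) (t s : J) (h : (t : ℝ) ≤ (s : ℝ)) :
    (LinearMap.ker (M.bond t s h)).map (φ.toFun t) ≤ LinearMap.ker (N.bond t s h) := by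
  rintro _ ⟨x, hx, rfl⟩
  rw [LinearMap.mem_ker, ← LinearMap.comp_apply, ← φ.comm t s h, LinearMap.comp_apply,
    LinearMap.mem_ker.mp hx, map_zero]

theorem map_V_le (φ : M.Inclusion N) (a t b : J) (htb : (t : ℝ) < (b : ℝ)) :
    (M.V a t b htb).map (φ.toFun t) ≤ N.V a t b htb := by
  rw [PersistenceModule.V, PersistenceModule.V]
  refine le_inf ?_ ?_
  · refine le_iInf fun s => le_iInf fun h => ?_
    exact (Submodule.map_mono ((inf_le_left).trans
      (iInf_le_of_le s (iInf_le _ h)))).trans (map_range_le φ s t h.2.le)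
  · refine le_iInf fun s => le_iInf fun h => ?_
    exact (Submodule.map_mono ((inf_le_right).trans
      (iInf_le_of_le s (iInf_le _ h)))).trans (map_ker_le φ t s (htb.trans h).le)

theorem map_W_le (φ : M.Inclusion N) (a t b : J)
    (hat : (a : ℝ) < (t : ℝ)) (htb : (t : ℝ) < (b : ℝ)) :
    (M.W a t b hat htb).map (φ.toFun t) ≤ N.W a t b hat htb := by
  rw [PersistenceModule.W, PersistenceModule.W, Submodule.map_sup]
  refine sup_le (le_sup_of_le_left ?_) (le_sup_of_le_right ?_)
  · refine le_inf ?_ ?_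
    · exact (Submodule.map_mono inf_le_left).trans (map_range_le φ a t hat.le)
    · refine le_iInf fun s => le_iInf fun h => ?_
      exact (Submodule.map_mono ((inf_le_right).trans
        (iInf_le_of_le s (iInf_le _ h)))).trans (map_ker_le φ t s (htb.trans h).le)
  · refine le_inf ?_ ?_
    · refine le_iInf fun s => le_iInf fun h => ?_
      exact (Submodule.map_mono ((inf_le_left).trans
        (iInf_le_of_le s (iInf_le _ h)))).trans (map_range_le φ s t h.2.le)
    · exact (Submodule.map_mono inf_le_right).trans (map_ker_le φ t b htb.le)

/-- The key lemma: tightness at `(a,b)` pushes a decomposition in `W^N` back to `W^M`. -/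
theorem key_lemma (φ : M.Inclusion N) (hφ : φ.Tight) (a t b : J)
    (hat : (a : ℝ) < (t : ℝ)) (htb : (t : ℝ) < (b : ℝ)) (x : M.space t)
    (hx : x ∈ M.V a t b htb) (hfx : φ.toFun t x ∈ N.W a t b hat htb) :
    x ∈ M.W a t b hat htb := by
  have hab : (a : ℝ) < (b : ℝ) := hat.trans htb
  rw [PersistenceModule.W, Submodule.mem_sup] at hfx
  obtain ⟨y, hy, z, hz, hyz⟩ := hfx
  obtain ⟨⟨u, hu⟩, hy2⟩ := hy
  obtain ⟨hz1, hz2⟩ := hz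
  rw [PersistenceModule.V, Submodule.mem_inf, Submodule.mem_iInf] at hx
  obtain ⟨hx1, hx2⟩ := hx
  -- φ_b (ρ^M_{t,b} x) lands in range φ_b ⊓ Im ρ^N_{a,b}
  have h1 : N.bond t b htb.le (φ.toFun t x) = N.bond a b hab.le u := by
    rw [← hyz, map_add, LinearMap.mem_ker.mp hz2, add_zero, ← hu]
    exact N.bond_bond a t b hat.le htb.le u
  have h2 : φ.toFun b (M.bond t b htb.le x) = N.bond a b hab.le u := by
    rw [← h1]
    exact DFunLike.congr_fun (φ.comm t b htb.le) x
  have h3 : φ.toFun b (M.bond t b htb.le x) ∈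
      (LinearMap.range (M.bond a b hab.le)).map (φ.toFun b) := by
    rw [hφ a b hab]
    exact ⟨⟨_, rfl⟩, by rw [h2]; exact ⟨u, rfl⟩⟩
  obtain ⟨m, hm, hm2⟩ := h3
  obtain ⟨w, rfl⟩ := hm
  have hxb : M.bond a b hab.le w = M.bond t b htb.le x := φ.injective b hm2
  set y' : M.space t := M.bond a t hat.le w with hy'
  have hz'ker : M.bond t b htb.le (x - y') = 0 := by
    rw [map_sub, hy', M.bond_bond a t b hat.le htb.le w, hxb, sub_self]
  rw [PersistenceModule.W, Submodule.mem_sup]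
  refine ⟨y', ?_, x - y', ?_, by abel⟩
  · refine ⟨⟨w, rfl⟩, ?_⟩
    simp only [SetLike.mem_coe]
    rw [Submodule.mem_iInf]
    intro s
    rw [Submodule.mem_iInf]
    intro h
    rw [LinearMap.mem_ker]
    have e1 : M.bond t s (htb.trans h).le x = 0 :=
      LinearMap.mem_ker.mp ((Submodule.mem_iInf _).mp ((Submodule.mem_iInf _).mp hx2 s) h)
    have e2 : M.bond t s (htb.trans h).le (x - y') = 0 := by
      rw [← M.bond_bond t b s htb.le h.le (x - y'), hz'ker, map_zero]
    have : M.bond t s (htb.trans h).le y'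
        = M.bond t s (htb.trans h).le x - M.bond t s (htb.trans h).le (x - y') := by
      rw [← map_sub, sub_sub_cancel]
    rw [this, e1, e2, sub_zero]
  · refine ⟨?_, LinearMap.mem_ker.mpr hz'ker⟩
    simp only [SetLike.mem_coe]
    rw [Submodule.mem_iInf]
    intro s
    rw [Submodule.mem_iInf]
    intro h
    have hxm : x ∈ LinearMap.range (M.bond s t h.2.le) :=
      (Submodule.mem_iInf _).mp (hx1 s) h
    have hy'm : y' ∈ LinearMap.range (M.bond s t h.2.le) :=
      M.range_bond_mono a s t h.1.le h.2.le hat.le ⟨w, rfl⟩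
    exact Submodule.sub_mem _ hxm hy'm

end PersistenceModule

/-- Let `φ` be a tight inclusion of a persistence module `M` into a
persistence module `N` over `J`, let `a < t < b` be elements of `J`, and assume `N_t` is
finite-dimensional. Then
`dim V^M_t(a,b) − dim W^M_t(a,b) ≤ dim V^N_t(a,b) − dim W^N_t(a,b)`,
i.e. tight inclusions do not decrease the multiplicity of the bar `(a,b]`. -/
theorem multiplicity_le_of_tight
    {F : Type*} [Field F] {J : Set ℝ} {M N : PersistenceModule F J}
    (φ : M.Inclusion N) (hφ : φ.Tight)
    (a t b : J) (hat : (a : ℝ) < (t : ℝ)) (htb : (t : ℝ) < (b : ℝ))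
    [FiniteDimensional F (N.space t)] :
    (Module.finrank F (M.V a t b htb) : ℤ) - Module.finrank F (M.W a t b hat htb) ≤
      (Module.finrank F (N.V a t b htb) : ℤ) - Module.finrank F (N.W a t b hat htb) := by
  classical
  have hfinj := φ.injective t
  set f := φ.toFun t with hf
  set VM := M.V a t b htb with hVM
  set WM := M.W a t b hat htb with hWM
  set VN := N.V a t b htb with hVN
  set WN := N.W a t b hat htb with hWN
  have hWVN : WN ≤ VN := N.W_le_V a t b hat htb
  have hVmap : VM.map f ≤ VN := PersistenceModule.map_V_le φ a t b htb
  have hWmap : WM.map f ≤ WN := PersistenceModule.map_W_le φ a t b hat htb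
  have hWeq : WM.map f = VM.map f ⊓ WN := by
    apply le_antisymm
    · exact le_inf (Submodule.map_mono (M.W_le_V a t b hat htb)) hWmap
    · rintro x ⟨hx1, hx2⟩
      obtain ⟨m, hm, rfl⟩ := hx1
      exact ⟨m, PersistenceModule.key_lemma φ hφ a t b hat htb m hm hx2, rfl⟩
  have eV : Module.finrank F VM = Module.finrank F (VM.map f) :=
    LinearEquiv.finrank_eq (Submodule.equivMapOfInjective f hfinj VM)
  have eW : Module.finrank F WM = Module.finrank F (WM.map f) :=
    LinearEquiv.finrank_eq (Submodule.equivMapOfInjective f hfinj WM)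
  have h4 := Submodule.finrank_sup_add_finrank_inf_eq (VM.map f) WN
  have h5 : Module.finrank F ↥(VM.map f ⊔ WN) ≤ Module.finrank F VN :=
    Submodule.finrank_mono (sup_le hVmap hWVN)
  have h6 : Module.finrank F VN ≤ Module.finrank F (N.space t) :=
    Submodule.finrank_le VN
  rw [eV, eW, hWeq]
  omega
end

section
/- Let φ be a tight inclusion of a persistence module M into a persistence module N over J, let a < t < b be elements of J, assume N_t is finite-dimensional, and let q : N_t → N_t / W^N_t(a,b) be the natural quotient map. Then dim q(φ_t(V^M_t(a,b))) = dim V^M_t(a,b) − dim W^M_t(a,b). -/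
/-- Let `φ` be a tight inclusion of a persistence module `M` into a
persistence module `N` over `J`, let `a < t < b` be elements of `J`, assume `N_t` is
finite-dimensional, and let `q : N_t → N_t ⧸ W^N_t(a,b)` be the natural quotient map.
Then `dim q(φ_t(V^M_t(a,b))) = dim V^M_t(a,b) − dim W^M_t(a,b)`. -/
theorem finrank_quotient_image_V
    {F : Type*} [Field F] {J : Set ℝ} {M N : PersistenceModule F J}
    (φ : M.Inclusion N) (hφ : φ.Tight)
    (a t b : J) (hat : (a : ℝ) < (t : ℝ)) (htb : (t : ℝ) < (b : ℝ))
    [FiniteDimensional F (N.space t)] :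
    (Module.finrank F (((M.V a t b htb).map (φ.toFun t)).map (N.W a t b hat htb).mkQ) : ℤ) =
      (Module.finrank F (M.V a t b htb) : ℤ) - Module.finrank F (M.W a t b hat htb) := by
  classical
  haveI : FiniteDimensional F (M.space t) :=
    FiniteDimensional.of_injective (φ.toFun t) (φ.injective t)
  have hab : (a : ℝ) < (b : ℝ) := hat.trans htb
  have hcomm : ∀ (r r' : J) (h : (r : ℝ) ≤ (r' : ℝ)) (m : M.space r),
      φ.toFun r' (M.bond r r' h m) = N.bond r r' h (φ.toFun r m) := fun r r' h m =>
    LinearMap.congr_fun (φ.comm r r' h) m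
  set f := φ.toFun t with hfdef
  -- key set-theoretic equality
  have key : M.V a t b htb ⊓ Submodule.comap f (N.W a t b hat htb) = M.W a t b hat htb := by
    apply le_antisymm
    · rintro x hx
      rw [Submodule.mem_inf] at hx
      obtain ⟨hxV, hxW⟩ := hx
      rw [PersistenceModule.V, Submodule.mem_inf] at hxV
      obtain ⟨hxI, hxK⟩ := hxV
      rw [Submodule.mem_comap, PersistenceModule.W] at hxW
      obtain ⟨y1, hy1, y2, hy2, hsum⟩ := Submodule.mem_sup.mp hxW
      rw [Submodule.mem_inf] at hy1 hy2
      obtain ⟨⟨z, hz⟩, _⟩ := hy1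
      obtain ⟨_, hy2k⟩ := hy2
      -- compute bond t b (f x)
      have h1 : φ.toFun b (M.bond t b htb.le x) = N.bond a b hab.le z := by
        rw [hcomm t b htb.le x]
        have : N.bond t b htb.le (f x) = N.bond t b htb.le y1 + N.bond t b htb.le y2 := by
          rw [← map_add, hsum]
        rw [this, LinearMap.mem_ker.mp hy2k, add_zero, ← hz,
          ← LinearMap.comp_apply, N.bond_comp a t b hat.le htb.le]
      have hmem : φ.toFun b (M.bond t b htb.le x) ∈
          (LinearMap.range (M.bond a b hab.le)).map (φ.toFun b) := by
        rw [hφ a b hab]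
        exact ⟨⟨_, rfl⟩, h1 ▸ ⟨z, rfl⟩⟩
      obtain ⟨m, hmr, hmeq⟩ := hmem
      have hm' : m = M.bond t b htb.le x := φ.injective b hmeq
      obtain ⟨w, hw⟩ := hmr
      -- hw : M.bond a b w = m
      have hbx : M.bond t b htb.le x = M.bond a b hab.le w := by rw [hw, hm']
      set x1 := M.bond a t hat.le w with hx1def
      have hbx1 : M.bond t b htb.le x1 = M.bond t b htb.le x := by
        rw [hx1def, ← LinearMap.comp_apply, M.bond_comp a t b hat.le htb.le, hbx]
      rw [PersistenceModule.W]
      rw [Submodule.mem_sup]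
      refine ⟨x1, ?_, x - x1, ?_, by abel⟩
      · rw [Submodule.mem_inf]
        refine ⟨⟨w, rfl⟩, ?_⟩
        rw [Submodule.mem_iInf]
        intro s
        rw [Submodule.mem_iInf]
        intro hs
        rw [LinearMap.mem_ker, ← M.bond_comp t b s htb.le hs.le, LinearMap.comp_apply,
          hbx1, ← LinearMap.comp_apply, M.bond_comp t b s htb.le hs.le]
        have := (Submodule.mem_iInf _).mp ((Submodule.mem_iInf _).mp hxK s) hs
        exact LinearMap.mem_ker.mp this
      · rw [Submodule.mem_inf]
        constructor
        · rw [Submodule.mem_iInf]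
          intro s
          rw [Submodule.mem_iInf]
          intro hs
          have hxs := (Submodule.mem_iInf _).mp ((Submodule.mem_iInf _).mp hxI s) hs
          obtain ⟨u, hu⟩ := hxs
          have hx1s : x1 ∈ LinearMap.range (M.bond s t hs.2.le) := by
            refine ⟨M.bond a s hs.1.le w, ?_⟩
            rw [← LinearMap.comp_apply, M.bond_comp a s t hs.1.le hs.2.le]
          obtain ⟨v, hv⟩ := hx1s
          exact ⟨u - v, by rw [map_sub, hu, hv]⟩
        · rw [LinearMap.mem_ker, map_sub, hbx1, sub_self]
    · -- easy direction
      rw [PersistenceModule.W]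
      apply sup_le
      · -- range bond a t ⊓ K
        rw [le_inf_iff]
        constructor
        · rw [PersistenceModule.V]
          apply le_inf
          · apply le_trans inf_le_left
            apply le_iInf; intro s
            apply le_iInf; intro hs
            rintro x ⟨u, hu⟩
            exact ⟨M.bond a s hs.1.le u, by
              rw [← LinearMap.comp_apply, M.bond_comp a s t hs.1.le hs.2.le, hu]⟩
          · exact inf_le_right
        · rintro x ⟨⟨u, hu⟩, hK⟩
          rw [Submodule.mem_comap, PersistenceModule.W]
          apply Submodule.mem_sup_left
          rw [Submodule.mem_inf]
          constructor
          · exact ⟨φ.toFun a u, by rw [← hcomm a t hat.le u, hu, hfdef]⟩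
          · rw [Submodule.mem_iInf]
            intro s
            rw [Submodule.mem_iInf]
            intro hs
            have hks := (Submodule.mem_iInf _).mp ((Submodule.mem_iInf _).mp hK s) hs
            rw [LinearMap.mem_ker, hfdef, ← hcomm t s (htb.trans hs).le x,
              LinearMap.mem_ker.mp hks, map_zero]
      · -- I ⊓ ker bond t b
        rw [le_inf_iff]
        constructor
        · rw [PersistenceModule.V]
          apply le_inf
          · exact inf_le_left
          · apply le_trans inf_le_right
            apply le_iInf; intro s
            apply le_iInf; intro hs
            intro x hx
            rw [LinearMap.mem_ker, ← M.bond_comp t b s htb.le hs.le, LinearMap.comp_apply,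
              LinearMap.mem_ker.mp hx, map_zero]
        · rintro x ⟨hI, hk⟩
          rw [Submodule.mem_comap, PersistenceModule.W]
          apply Submodule.mem_sup_right
          rw [Submodule.mem_inf]
          constructor
          · rw [Submodule.mem_iInf]
            intro s
            rw [Submodule.mem_iInf]
            intro hs
            have := (Submodule.mem_iInf _).mp ((Submodule.mem_iInf _).mp hI s) hs
            obtain ⟨u, hu⟩ := this
            exact ⟨φ.toFun s u, by rw [← hcomm s t hs.2.le u, hu, hfdef]⟩
          · rw [LinearMap.mem_ker, hfdef, ← hcomm t b htb.le x,
              LinearMap.mem_ker.mp hk, map_zero]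
  -- now the dimension count
  set V := M.V a t b htb
  set Wm := M.W a t b hat htb
  set Wn := N.W a t b hat htb
  set S := V.map f with hSdef
  have hfin1 : Module.finrank F S = Module.finrank F V :=
    ((Submodule.equivMapOfInjective f (φ.injective t) V).finrank_eq).symm
  have hinter : S ⊓ Wn = Wm.map f := by
    rw [← key, Submodule.map_inf_eq_map_inf_comap]
  have hfin2 : Module.finrank F (S ⊓ Wn : Submodule F (N.space t)) = Module.finrank F Wm := by
    rw [hinter]
    exact ((Submodule.equivMapOfInjective f (φ.injective t) Wm).finrank_eq).symm
  have hrank : Module.finrank F (S.map Wn.mkQ) +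
      Module.finrank F (S ⊓ Wn : Submodule F (N.space t)) = Module.finrank F S := by
    have hg := LinearMap.finrank_range_add_finrank_ker (Wn.mkQ.comp S.subtype)
    have hr : LinearMap.range (Wn.mkQ.comp S.subtype) = S.map Wn.mkQ := by
      rw [LinearMap.range_comp, Submodule.range_subtype]
    have hk : LinearMap.ker (Wn.mkQ.comp S.subtype) = Submodule.comap S.subtype Wn := by
      rw [LinearMap.ker_comp, Submodule.ker_mkQ]
    have hkfin : Module.finrank F (LinearMap.ker (Wn.mkQ.comp S.subtype)) =
        Module.finrank F (S ⊓ Wn : Submodule F (N.space t)) := by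
      rw [hk]
      have := (Submodule.equivMapOfInjective S.subtype (Submodule.injective_subtype S)
        (Submodule.comap S.subtype Wn)).finrank_eq
      rw [this, Submodule.map_comap_subtype, inf_comm]
    rw [hr, hkfin] at hg
    exact hg
  have hle : Wm ≤ V := by
    rw [← key]; exact inf_le_left
  have hfin3 : Module.finrank F Wm ≤ Module.finrank F V := Submodule.finrank_mono hle
  have : Module.finrank F (S.map Wn.mkQ) + Module.finrank F Wm = Module.finrank F V := by
    rw [← hfin2, hrank, hfin1]
  omega
end
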